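/- Let φ(s) := exp(−exp(1/s)) for s > 0, and let ψ(t) := 1/log(log(1/t)) (the inverse of φ, defined for small t > 0). Suppose a : (0,∞) → (0,∞) satisfies C·t ≤ a(t) ≤ C'·t for all t > 0, for some constants 0 < C ≤ C'. Then for every natural number n, the quantity (ψ(a(φ(s))) − s)/s^n tends to 0 as s tends to 0 from the right. In other words, the conjugated map ψ ∘ a ∘ φ is flat on the identity at 0: ψ(a(φ(s))) − s = o(s^n) as s → 0⁺ for every n. -/

import Mathlib

open Filter Set

/-- For `|u| ≤ 1/2`, `|log (1 - u)| ≤ 2 |u|`. -/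
lemma aux_abs_log_one_sub_le {u : ℝ} (hu : |u| ≤ 1/2) :
    |Real.log (1 - u)| ≤ 2 * |u| := by
  obtain ⟨hl, hr⟩ := abs_le.mp hu
  have h1 : (0:ℝ) < 1 - u := by linarith
  rw [abs_le]
  constructor
  · have h2 : Real.log (1-u)⁻¹ ≤ (1-u)⁻¹ - 1 :=
      Real.log_le_sub_one_of_pos (inv_pos.mpr h1)
    rw [Real.log_inv] at h2
    have h3 : (1-u)⁻¹ - 1 = u / (1-u) := by field_simp; ring
    have h4 : u/(1-u) ≤ 2*|u| := by
      rcases le_or_gt 0 u with h|h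
      · rw [div_le_iff₀ h1, abs_of_nonneg h]; nlinarith
      · have h5 : u/(1-u) < 0 := div_neg_of_neg_of_pos h h1
        have := abs_nonneg u
        linarith
    linarith
  · have h2 := Real.log_le_sub_one_of_pos h1
    have h3 : Real.log (1-u) ≤ -u := by linarith
    have h4 : -u ≤ |u| := neg_le_abs u
    have := abs_nonneg u
    linarith

/-- `exp (-(1/x)) ≤ n! * x^n` for `x > 0`. -/
lemma aux_exp_neg_le {x : ℝ} (hx : 0 < x) (n : ℕ) :
    Real.exp (-(1/x)) ≤ (n.factorial : ℝ) * x ^ n := by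
  have h := Real.pow_div_factorial_le_exp (x := 1/x) (by positivity) n
  have hfac : (0:ℝ) < (n.factorial : ℝ) := by positivity
  have hxn : (0:ℝ) < x ^ n := by positivity
  have h2 : (1/x) ^ n ≤ (n.factorial : ℝ) * Real.exp (1/x) := by
    rw [div_le_iff₀ hfac] at h; linarith [h]
  rw [Real.exp_neg, inv_le_iff_one_le_mul₀ (Real.exp_pos _)]
  have h3 : (1/x) ^ n = 1 / x ^ n := by rw [div_pow, one_pow]
  rw [h3] at h2
  have h4 : 1 ≤ (n.factorial : ℝ) * Real.exp (1/x) * x ^ n := by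
    rw [div_le_iff₀ hxn] at h2; linarith
  nlinarith [h4]

/-- Main pointwise bound, with `a (φ s)` written as `c * φ s`. -/
lemma aux_main {s c K : ℝ} (hs0 : 0 < s) (hcpos : 0 < c)
    (hlogc : |Real.log c| ≤ K) (hK0 : 0 ≤ K)
    (h1 : Real.exp (-(1/s)) < 1/(2*(K+1)))
    (h3 : s * Real.exp (-(1/s)) < 1/(4*K+4)) (n : ℕ) :
    |((Real.log (Real.log (1 / (c * Real.exp (-Real.exp (1/s))))))⁻¹ - s) / s ^ n|
      ≤ 4*K*(n.factorial : ℝ) * s^2 := by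
  set e : ℝ := Real.exp (-(1/s)) with hedef
  have he : 0 < e := Real.exp_pos _
  set E : ℝ := Real.exp (1/s) with hEdef
  have hEpos : 0 < E := Real.exp_pos _
  have hEinv : E * e = 1 := by rw [hEdef, hedef, ← Real.exp_add]; simp
  set u : ℝ := Real.log c * e with hudef
  have hu2 : |u| ≤ K * e := by
    rw [hudef, abs_mul, abs_of_pos he]
    exact mul_le_mul_of_nonneg_right hlogc he.le
  have huhalf : |u| ≤ 1/2 := by
    have h : K * e ≤ (K+1) * (1/(2*(K+1))) := by nlinarith
    have h' : (K+1) * (1/(2*(K+1))) = 1/2 := by field_simp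
    linarith [hu2]
  obtain ⟨hul, hur⟩ := abs_le.mp huhalf
  have h1mu : (0:ℝ) < 1 - u := by linarith
  have ht : (0:ℝ) < Real.exp (-Real.exp (1/s)) := Real.exp_pos _
  have hlog1a : Real.log (1 / (c * Real.exp (-Real.exp (1/s)))) = E * (1 - u) := by
    rw [one_div, Real.log_inv,
      Real.log_mul (ne_of_gt hcpos) (ne_of_gt ht), Real.log_exp]
    have h9 : E * u = Real.log c := by
      rw [hudef, mul_comm (Real.log c), ← mul_assoc, hEinv]; ring
    have h10 : E * (1 - u) = E - E * u := by ring
    rw [h10, h9, hEdef]; ring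
  set ε : ℝ := Real.log (1 - u) with hεdef
  have hε : |ε| ≤ 2 * (K * e) := by
    have := aux_abs_log_one_sub_le huhalf
    linarith [this, hu2, abs_nonneg u]
  have hX : Real.log (Real.log (1 / (c * Real.exp (-Real.exp (1/s))))) = 1/s + ε := by
    rw [hlog1a, Real.log_mul (ne_of_gt hEpos) (ne_of_gt h1mu), hEdef, Real.log_exp]
  rw [hX]
  have hse : 0 < s * e := by positivity
  have hB : (4*K+4) * (1/(4*K+4)) = 1 := by field_simp
  have hA : (4*K+4) * (s*e) < 1 := by
    have := mul_lt_mul_of_pos_left h3 (show (0:ℝ) < 4*K+4 by linarith)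
    rw [hB] at this; exact this
  have h4Kse : 4*K*(s*e) ≤ 1 := by nlinarith
  have h2Ke : 2 * (K * e) ≤ 1/(2*s) := by
    rw [le_div_iff₀ (by positivity)]; nlinarith
  have hXlb : 1/(2*s) ≤ 1/s + ε := by
    have hεl : -(2 * (K * e)) ≤ ε := by linarith [(abs_le.mp hε).1]
    have hh : 1/s - 1/(2*s) = 1/(2*s) := by field_simp; ring
    linarith
  have hXpos : (0:ℝ) < 1/s + ε := lt_of_lt_of_le (by positivity) hXlb
  have hXeq : (1/s + ε)⁻¹ - s = -(s*ε)/(1/s + ε) := by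
    rw [eq_div_iff (ne_of_gt hXpos), sub_mul, inv_mul_cancel₀ (ne_of_gt hXpos),
      mul_add, mul_one_div, div_self (ne_of_gt hs0)]
    ring
  have hnum : |(1/s + ε)⁻¹ - s| ≤ 4*K*e * s^2 := by
    rw [hXeq, abs_div, abs_neg, abs_mul, abs_of_pos hs0, abs_of_pos hXpos,
      div_le_iff₀ hXpos]
    have h5 : s * |ε| ≤ s * (2 * (K * e)) := mul_le_mul_of_nonneg_left hε hs0.le
    have h6 : 4*K*e * s^2 * (1/(2*s)) ≤ 4*K*e * s^2 * (1/s + ε) :=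
      mul_le_mul_of_nonneg_left hXlb (by positivity)
    have h7 : 4*K*e * s^2 * (1/(2*s)) = s * (2 * (K * e)) := by
      field_simp; ring
    linarith
  have hexp : e ≤ (n.factorial : ℝ) * s ^ n := aux_exp_neg_le hs0 n
  have hsn : (0:ℝ) < s ^ n := by positivity
  rw [abs_div, abs_of_pos hsn, div_le_iff₀ hsn]
  calc |(1/s + ε)⁻¹ - s| ≤ 4*K*e * s^2 := hnum
    _ ≤ 4*K*((n.factorial : ℝ) * s ^ n) * s^2 := by
        have h8 : K * e ≤ K * ((n.factorial : ℝ) * s ^ n) :=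
          mul_le_mul_of_nonneg_left hexp hK0
        have h9 : K * e * s^2 ≤ K * ((n.factorial : ℝ) * s ^ n) * s^2 :=
          mul_le_mul_of_nonneg_right h8 (sq_nonneg s)
        linarith
    _ = 4*K*(n.factorial : ℝ) * s^2 * s^n := by ring

/-- with φ(s) = exp(−exp(1/s)) and ψ(t) = 1/log(log(1/t)), if
C·t ≤ a(t) ≤ C'·t for all t > 0 (0 < C ≤ C'), then for every n : ℕ,
(ψ(a(φ(s))) − s)/s^n → 0 as s → 0⁺. -/
theorem stmt2 (a : ℝ → ℝ) (C C' : ℝ) (hC : 0 < C) (hCC' : C ≤ C')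
    (hbound : ∀ t : ℝ, 0 < t → C * t ≤ a t ∧ a t ≤ C' * t) (n : ℕ) :
    Filter.Tendsto
      (fun s : ℝ =>
        ((Real.log (Real.log (1 / a (Real.exp (-Real.exp (1 / s))))))⁻¹ - s) / s ^ n)
      (nhdsWithin 0 (Set.Ioi 0)) (nhds 0) := by
  set K : ℝ := |Real.log C| ⊔ |Real.log C'| with hKdef
  have hK0 : 0 ≤ K := le_trans (abs_nonneg _) le_sup_left
  have hinv : Tendsto (fun s : ℝ => 1/s) (nhdsWithin (0:ℝ) (Set.Ioi 0)) atTop := by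
    simpa [one_div] using
      (tendsto_inv_nhdsGT_zero : Tendsto (fun x : ℝ => x⁻¹) (nhdsWithin (0:ℝ) (Set.Ioi 0)) atTop)
  have hgt : Tendsto (fun s : ℝ => Real.exp (-(1/s))) (nhdsWithin (0:ℝ) (Set.Ioi 0)) (nhds 0) :=
    Real.tendsto_exp_neg_atTop_nhds_zero.comp hinv
  have hid : Tendsto (fun s : ℝ => s) (nhdsWithin (0:ℝ) (Set.Ioi 0)) (nhds 0) :=
    Filter.tendsto_id.mono_left nhdsWithin_le_nhds
  have hst : Tendsto (fun s : ℝ => s * Real.exp (-(1/s)))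
      (nhdsWithin (0:ℝ) (Set.Ioi 0)) (nhds 0) := by
    simpa using hid.mul hgt
  have hE1 : ∀ᶠ s in nhdsWithin (0:ℝ) (Set.Ioi 0), Real.exp (-(1/s)) < 1/(2*(K+1)) :=
    hgt.eventually (eventually_lt_nhds (by positivity))
  have hE3 : ∀ᶠ s in nhdsWithin (0:ℝ) (Set.Ioi 0), s * Real.exp (-(1/s)) < 1/(4*K+4) :=
    hst.eventually (eventually_lt_nhds (by positivity))
  apply squeeze_zero_norm' (a := fun s : ℝ => (4*K*(n.factorial : ℝ)) * s^2)
  · filter_upwards [self_mem_nhdsWithin, hE1, hE3] with s hs h1 h3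
    have hs0 : (0:ℝ) < s := hs
    have ht : (0:ℝ) < Real.exp (-Real.exp (1/s)) := Real.exp_pos _
    obtain ⟨hlo, hhi⟩ := hbound _ ht
    have hat : 0 < a (Real.exp (-Real.exp (1/s))) := lt_of_lt_of_le (by positivity) hlo
    set c : ℝ := a (Real.exp (-Real.exp (1/s))) / Real.exp (-Real.exp (1/s)) with hcdef
    have hac : a (Real.exp (-Real.exp (1/s))) = c * Real.exp (-Real.exp (1/s)) := by
      field_simp [hcdef]
      rw [hcdef, div_mul_cancel₀ _ ht.ne']
    have hcC : C ≤ c := (le_div_iff₀ ht).mpr hlo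
    have hcC' : c ≤ C' := (div_le_iff₀ ht).mpr hhi
    have hcpos : 0 < c := lt_of_lt_of_le hC hcC
    have hC'pos : 0 < C' := lt_of_lt_of_le hC hCC'
    have hlogc : |Real.log c| ≤ K := by
      rw [abs_le]
      constructor
      · have h := Real.log_le_log hC hcC
        have h' : -|Real.log C| ≤ Real.log C := neg_abs_le _
        have hK1 : |Real.log C| ≤ K := le_sup_left
        linarith
      · have h := Real.log_le_log hcpos hcC'
        have h' : Real.log C' ≤ |Real.log C'| := le_abs_self _
        have hK2 : |Real.log C'| ≤ K := le_sup_right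
        linarith
    have key := aux_main hs0 hcpos hlogc hK0 h1 h3 n
    rw [Real.norm_eq_abs, hac]
    convert key using 5 <;> ring
  · have hcont : Tendsto (fun s : ℝ => (4*K*(n.factorial : ℝ)) * s^2) (nhds (0:ℝ))
        (nhds ((4*K*(n.factorial : ℝ)) * 0^2)) :=
      (continuous_const.mul (continuous_pow 2)).tendsto 0
    simpa using hcont.mono_left nhdsWithin_le_nhds
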